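/- Let A : [T₁,T₂] → ℝ be a positive lower semi-continuous function satisfying in the barrier sense d/dt⁺ A(t) ≤ (3/(4t)) A(t) − 2π χ + m a Γ + m a b for constants χ ∈ ℝ, m ∈ ℕ, a, Γ, b > 0 with m a (Γ + b) < 2πχ. Then t^{1/4}(t⁻¹A(t) + 4(2πχ − ma(Γ+b))) is non-increasing on [T₁,T₂], and T₂ < (1 + A(T₁)/(4T₁(2πχ − ma(Γ+b))))⁴ · T₁. -/

import Mathlib

open Set Filter Topology

/-- A lower semicontinuous function on `[α,β]` whose right Dini derivative is `≤ ε`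
in barrier sense for every `ε > 0` is non-increasing. -/
lemma dini_nonincreasing {α β : ℝ} (f : ℝ → ℝ)
    (hlsc : LowerSemicontinuousOn f (Set.Icc α β))
    (hdini : ∀ x ∈ Set.Ico α β, ∀ ε > 0, ∃ δ > 0, ∀ h : ℝ, 0 < h → h < δ → x + h ≤ β →
      f (x + h) - f x ≤ ε * h) :
    ∀ s ∈ Set.Icc α β, ∀ t ∈ Set.Icc α β, s ≤ t → f t ≤ f s := by
  intro s hs t ht hst
  rcases eq_or_lt_of_le hst with rfl | hst'
  · exact le_rfl
  -- it suffices to show `f t ≤ f s + ε (t - s)` for all `ε > 0`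
  have key : ∀ ε : ℝ, 0 < ε → f t ≤ f s + ε * (t - s) := by
    intro ε hε
    set E : Set ℝ := {r | r ∈ Set.Icc s t ∧ f r ≤ f s + ε * (r - s)} with hE
    have hsE : s ∈ E := ⟨⟨le_rfl, le_of_lt hst'⟩, by simp⟩
    have hEne : E.Nonempty := ⟨s, hsE⟩
    have hEbdd : BddAbove E := ⟨t, fun r hr => hr.1.2⟩
    set r₀ : ℝ := sSup E with hr₀
    have hsr₀ : s ≤ r₀ := le_csSup hEbdd hsE
    have hr₀t : r₀ ≤ t := csSup_le hEne fun r hr => hr.1.2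
    have hr₀Icc : r₀ ∈ Set.Icc α β := ⟨le_trans hs.1 hsr₀, le_trans hr₀t ht.2⟩
    -- Step A : r₀ ∈ E
    have hAE : r₀ ∈ E := by
      refine ⟨⟨hsr₀, hr₀t⟩, ?_⟩
      by_contra hcon
      push_neg at hcon
      set L : ℝ := f s + ε * (r₀ - s) with hL
      set y : ℝ := (L + f r₀) / 2 with hy
      have hLy : L < y := by rw [hy]; linarith
      have hyf : y < f r₀ := by rw [hy]; linarith
      have h1 : ∀ᶠ r in 𝓝[Set.Icc α β] r₀, y < f r := hlsc r₀ hr₀Icc y hyf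
      have hcontφ : ContinuousAt (fun r : ℝ => f s + ε * (r - s)) r₀ := by fun_prop
      have h2 : ∀ᶠ r in 𝓝 r₀, f s + ε * (r - s) < y :=
        hcontφ.eventually (gt_mem_nhds hLy)
      have h3 : ∀ᶠ r in 𝓝[Set.Icc α β] r₀, f s + ε * (r - s) < f r := by
        filter_upwards [h1, h2.filter_mono nhdsWithin_le_nhds] with r hr1 hr2
        linarith
      rw [eventually_nhdsWithin_iff, Metric.eventually_nhds_iff] at h3
      obtain ⟨δ, hδ, hδ3⟩ := h3
      obtain ⟨r, hrE, hrlt⟩ := exists_lt_of_lt_csSup hEne (show r₀ - δ < r₀ by linarith)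
      have hrr₀ : r ≤ r₀ := le_csSup hEbdd hrE
      have hrIcc : r ∈ Set.Icc α β := ⟨le_trans hs.1 hrE.1.1, le_trans hrE.1.2 ht.2⟩
      have : f s + ε * (r - s) < f r := hδ3 (show dist r r₀ < δ by
        rw [Real.dist_eq, abs_of_nonpos (by linarith)]; linarith) hrIcc
      exact absurd hrE.2 (not_le.mpr this)
    -- Step B : r₀ = t
    rcases eq_or_lt_of_le hr₀t with heq | hr₀t'
    · rw [← heq]; linarith [hAE.2]
    · exfalso
      have hr₀Ico : r₀ ∈ Set.Ico α β := ⟨hr₀Icc.1, lt_of_lt_of_le hr₀t' ht.2⟩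
      obtain ⟨δ, hδ, hδ2⟩ := hdini r₀ hr₀Ico ε hε
      set h : ℝ := min (δ / 2) (t - r₀) with hh
      have hhpos : 0 < h := lt_min (by linarith) (by linarith)
      have hhδ : h < δ := lt_of_le_of_lt (min_le_left _ _) (by linarith)
      have hhβ : r₀ + h ≤ β := le_trans (by have := min_le_right (δ/2) (t - r₀); linarith) ht.2
      have hfh : f (r₀ + h) - f r₀ ≤ ε * h := hδ2 h hhpos hhδ hhβ
      have hmem : r₀ + h ∈ E := by
        refine ⟨⟨by linarith, by have := min_le_right (δ/2) (t - r₀); linarith⟩, ?_⟩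
        have := hAE.2
        have : f (r₀ + h) ≤ f s + ε * (r₀ - s) + ε * h := by linarith
        calc f (r₀ + h) ≤ f s + ε * (r₀ - s) + ε * h := this
          _ = f s + ε * (r₀ + h - s) := by ring
      have : r₀ + h ≤ r₀ := le_csSup hEbdd hmem
      linarith
  by_contra hcon
  push_neg at hcon
  have hts : (0:ℝ) < t - s := by linarith
  have h0 : t - s ≠ 0 := ne_of_gt hts
  have hε : 0 < (f t - f s) / (2 * (t - s)) := div_pos (by linarith) (by linarith)
  have h1 := key _ hε
  have h2 : (f t - f s) / (2 * (t - s)) * (t - s) = (f t - f s) / 2 := by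
    field_simp
  rw [h2] at h1
  linarith

theorem stmt_3 (T₁ T₂ : ℝ) (hT₁ : 0 < T₁) (hT₁₂ : T₁ < T₂)
    (χ : ℝ) (m : ℕ) (a Γ b : ℝ) (ha : 0 < a) (hΓ : 0 < Γ) (hb : 0 < b)
    (hmain : (m : ℝ) * a * (Γ + b) < 2 * Real.pi * χ)
    (A : ℝ → ℝ)
    (hpos : ∀ t ∈ Set.Icc T₁ T₂, 0 < A t)
    (hlsc : LowerSemicontinuousOn A (Set.Icc T₁ T₂))
    (hdini : ∀ t ∈ Set.Ico T₁ T₂, ∀ ε > 0, ∃ δ > 0, ∀ h : ℝ, 0 < h → h < δ → t + h ≤ T₂ →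
      A (t + h) - A t ≤
        (3 / (4 * t) * A t - 2 * Real.pi * χ + (m : ℝ) * a * Γ + (m : ℝ) * a * b + ε) * h) :
    (∀ s ∈ Set.Icc T₁ T₂, ∀ t ∈ Set.Icc T₁ T₂, s ≤ t →
      t ^ ((1:ℝ)/4) * (A t / t + 4 * (2 * Real.pi * χ - (m : ℝ) * a * (Γ + b))) ≤
        s ^ ((1:ℝ)/4) * (A s / s + 4 * (2 * Real.pi * χ - (m : ℝ) * a * (Γ + b)))) ∧
    T₂ < (1 + A T₁ / (4 * T₁ * (2 * Real.pi * χ - (m : ℝ) * a * (Γ + b)))) ^ 4 * T₁ := by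
  set c : ℝ := 2 * Real.pi * χ - (m : ℝ) * a * (Γ + b) with hc_def
  have hc : 0 < c := by rw [hc_def]; linarith
  set u : ℝ → ℝ := fun r => r ^ ((1:ℝ)/4 - 1) with hu_def
  set v : ℝ → ℝ := fun r => 4 * c * r ^ ((1:ℝ)/4) with hv_def
  set g : ℝ → ℝ := fun r => u r * A r + v r with hg_def
  -- g agrees with the statement's expression on positive reals
  have hgf : ∀ r : ℝ, 0 < r → g r = r ^ ((1:ℝ)/4) * (A r / r + 4 * c) := by
    intro r hr
    have h1 : r ^ ((1:ℝ)/4 - 1) = r ^ ((1:ℝ)/4) / r := by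
      rw [Real.rpow_sub hr, Real.rpow_one]
    simp only [hg_def, hu_def, hv_def, h1]
    field_simp
  have hupos : ∀ r : ℝ, 0 < r → 0 < u r := fun r hr => Real.rpow_pos_of_pos hr _
  have hucont : ∀ r : ℝ, r ≠ 0 → ContinuousAt u r := fun r hr =>
    Real.continuousAt_rpow_const r _ (Or.inl hr)
  have hvcont : ∀ r : ℝ, r ≠ 0 → ContinuousAt v r := fun r hr =>
    continuousAt_const.mul (Real.continuousAt_rpow_const r _ (Or.inl hr))
  -- lower semicontinuity of g
  have hglsc : LowerSemicontinuousOn g (Set.Icc T₁ T₂) := by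
    intro x hx y hy
    have hx0 : 0 < x := lt_of_lt_of_le hT₁ hx.1
    have hux : 0 < u x := hupos x hx0
    set y' : ℝ := A x - (g x - y) / (2 * u x) with hy'
    have hy'A : y' < A x := by
      rw [hy']
      have : 0 < (g x - y) / (2 * u x) := div_pos (by linarith) (by linarith)
      linarith
    have hkey : y < u x * y' + v x := by
      rw [hy']
      have h2 : u x * (A x - (g x - y) / (2 * u x)) = u x * A x - (g x - y) / 2 := by
        field_simp
      rw [h2]
      have : u x * A x + v x = g x := rfl
      linarith
    have h1 : ∀ᶠ r in 𝓝[Set.Icc T₁ T₂] x, y' < A r := hlsc x hx y' hy'A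
    have hφ : ContinuousAt (fun r => u r * y' + v r) x :=
      ((hucont x (ne_of_gt hx0)).mul continuousAt_const).add (hvcont x (ne_of_gt hx0))
    have h2 : ∀ᶠ r in 𝓝 x, y < u r * y' + v r := hφ.eventually (lt_mem_nhds hkey)
    have h3 : ∀ᶠ r in 𝓝 x, 0 < u r := (hucont x (ne_of_gt hx0)).eventually (lt_mem_nhds hux)
    filter_upwards [h1, h2.filter_mono nhdsWithin_le_nhds,
      h3.filter_mono nhdsWithin_le_nhds] with r hr1 hr2 hr3
    have : u r * y' < u r * A r := by exact mul_lt_mul_of_pos_left hr1 hr3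
    calc y < u r * y' + v r := hr2
      _ < u r * A r + v r := by linarith
  -- Dini condition for g
  have hgdini : ∀ x ∈ Set.Ico T₁ T₂, ∀ ε' > 0, ∃ δ > 0, ∀ h : ℝ, 0 < h → h < δ →
      x + h ≤ T₂ → g (x + h) - g x ≤ ε' * h := by
    intro x hx ε' hε'
    have hx0 : 0 < x := lt_of_lt_of_le hT₁ hx.1
    have hux : 0 < u x := hupos x hx0
    set ε : ℝ := ε' / (2 * u x) with hε_def
    have hε : 0 < ε := div_pos hε' (by linarith)
    set K : ℝ := 3 / (4 * x) * A x - 2 * Real.pi * χ + (m : ℝ) * a * Γ + (m : ℝ) * a * b + ε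
      with hK_def
    obtain ⟨δ₁, hδ₁, hd1⟩ := hdini x hx ε hε
    -- derivatives of u and v at x
    set u' : ℝ := ((1:ℝ)/4 - 1) * x ^ ((1:ℝ)/4 - 1 - 1) with hu'
    set v' : ℝ := 4 * c * ((1:ℝ)/4 * x ^ ((1:ℝ)/4 - 1)) with hv'
    have hdu : HasDerivAt u u' x := Real.hasDerivAt_rpow_const (Or.inl (ne_of_gt hx0))
    have hdv : HasDerivAt v v' x := by
      have := (Real.hasDerivAt_rpow_const (x := x) (p := (1:ℝ)/4) (Or.inl (ne_of_gt hx0)))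
      exact this.const_mul (4 * c)
    -- limit of the difference-quotient bracket
    have hmap : Tendsto (fun h : ℝ => x + h) (𝓝[>] (0:ℝ)) (𝓝 x) := by
      have : Tendsto (fun h : ℝ => x + h) (𝓝 (0:ℝ)) (𝓝 (x + 0)) :=
        (continuous_const.add continuous_id).tendsto 0
      simpa using this.mono_left nhdsWithin_le_nhds
    have hmap' : Tendsto (fun h : ℝ => x + h) (𝓝[>] (0:ℝ)) (𝓝[≠] x) := by
      rw [tendsto_nhdsWithin_iff]
      refine ⟨hmap, ?_⟩
      filter_upwards [eventually_mem_nhdsWithin] with h hh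
      simp only [Set.mem_compl_iff, Set.mem_singleton_iff]
      have : (0:ℝ) < h := hh
      intro hcon
      nlinarith [hcon]
    have hslope_u : Tendsto (fun h : ℝ => (u (x + h) - u x) / h) (𝓝[>] (0:ℝ)) (𝓝 u') := by
      have := (hasDerivAt_iff_tendsto_slope.1 hdu).comp hmap'
      refine this.congr fun h => ?_
      simp only [Function.comp_apply, slope_def_field]
      congr 1
      ring
    have hslope_v : Tendsto (fun h : ℝ => (v (x + h) - v x) / h) (𝓝[>] (0:ℝ)) (𝓝 v') := by
      have := (hasDerivAt_iff_tendsto_slope.1 hdv).comp hmap'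
      refine this.congr fun h => ?_
      simp only [Function.comp_apply, slope_def_field]
      congr 1
      ring
    have hcu : Tendsto (fun h : ℝ => u (x + h)) (𝓝[>] (0:ℝ)) (𝓝 (u x)) :=
      (hucont x (ne_of_gt hx0)).tendsto.comp hmap
    set B : ℝ → ℝ := fun h => u (x + h) * K + (u (x + h) - u x) / h * A x + (v (x + h) - v x) / h
      with hB_def
    have hBtend : Tendsto B (𝓝[>] (0:ℝ)) (𝓝 (u x * K + u' * A x + v')) :=
      ((hcu.mul_const K).add (hslope_u.mul_const (A x))).add hslope_v
    -- compute the limit: it equals ε'/2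
    have hlim : u x * K + u' * A x + v' = ε' / 2 := by
      have hxne : x ≠ 0 := ne_of_gt hx0
      have hune : x ^ ((1:ℝ)/4 - 1) ≠ 0 := ne_of_gt hux
      have hw : x ^ ((1:ℝ)/4 - 1 - 1) = x ^ ((1:ℝ)/4 - 1) / x := by
        rw [Real.rpow_sub hx0, Real.rpow_one]
      rw [hK_def, hε_def, hu', hv', hw, hc_def]
      simp only [hu_def]
      generalize hwd : x ^ ((1:ℝ)/4 - 1) = w
      rw [hwd] at hune
      field_simp [hxne, hune]
      ring
    have hBlt : ∀ᶠ h in 𝓝[>] (0:ℝ), B h < ε' := by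
      rw [hlim] at hBtend
      exact hBtend.eventually (gt_mem_nhds (by linarith : ε' / 2 < ε'))
    rw [eventually_nhdsWithin_iff, Metric.eventually_nhds_iff] at hBlt
    obtain ⟨δ₂, hδ₂, hd2⟩ := hBlt
    refine ⟨min δ₁ δ₂, lt_min hδ₁ hδ₂, ?_⟩
    intro h hh0 hhδ hhT₂
    have hhδ₁ : h < δ₁ := lt_of_lt_of_le hhδ (min_le_left _ _)
    have hhδ₂ : h < δ₂ := lt_of_lt_of_le hhδ (min_le_right _ _)
    have hBh : B h < ε' := hd2 (by rw [Real.dist_eq, sub_zero, abs_of_pos hh0]; exact hhδ₂)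
      (Set.mem_Ioi.mpr hh0)
    have hA : A (x + h) - A x ≤ K * h := hd1 h hh0 hhδ₁ hhT₂
    have huxh : 0 < u (x + h) := hupos _ (by linarith)
    have hstep : g (x + h) - g x ≤ B h * h := by
      have e1 : g (x + h) - g x
          = u (x + h) * (A (x + h) - A x) + (u (x + h) - u x) * A x + (v (x + h) - v x) := by
        simp only [hg_def]; ring
      have e2 : B h * h
          = u (x + h) * (K * h) + (u (x + h) - u x) * A x + (v (x + h) - v x) := by
        simp only [hB_def]
        field_simp
      rw [e1, e2]
      have : u (x + h) * (A (x + h) - A x) ≤ u (x + h) * (K * h) :=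
        mul_le_mul_of_nonneg_left hA (le_of_lt huxh)
      linarith
    calc g (x + h) - g x ≤ B h * h := hstep
      _ ≤ ε' * h := mul_le_mul_of_nonneg_right (le_of_lt hBh) (le_of_lt hh0)
  -- apply the monotonicity lemma
  have hmono := dini_nonincreasing g hglsc hgdini
  constructor
  · intro s hs t ht hst
    have := hmono s hs t ht hst
    rwa [hgf s (lt_of_lt_of_le hT₁ hs.1), hgf t (lt_of_lt_of_le hT₁ ht.1)] at this
  · -- extinction bound
    have hT₂0 : 0 < T₂ := lt_trans hT₁ hT₁₂
    have hmem₁ : T₁ ∈ Set.Icc T₁ T₂ := ⟨le_rfl, le_of_lt hT₁₂⟩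
    have hmem₂ : T₂ ∈ Set.Icc T₁ T₂ := ⟨le_of_lt hT₁₂, le_rfl⟩
    have h1 := hmono T₁ hmem₁ T₂ hmem₂ (le_of_lt hT₁₂)
    rw [hgf T₁ hT₁, hgf T₂ hT₂0] at h1
    have hA₂ : 0 < A T₂ := hpos T₂ hmem₂
    have hr₂ : 0 < T₂ ^ ((1:ℝ)/4) := Real.rpow_pos_of_pos hT₂0 _
    have hr₁ : 0 < T₁ ^ ((1:ℝ)/4) := Real.rpow_pos_of_pos hT₁ _
    have h2 : T₂ ^ ((1:ℝ)/4) * (4 * c) < T₁ ^ ((1:ℝ)/4) * (A T₁ / T₁ + 4 * c) := by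
      have : T₂ ^ ((1:ℝ)/4) * (4 * c) < T₂ ^ ((1:ℝ)/4) * (A T₂ / T₂ + 4 * c) := by
        apply mul_lt_mul_of_pos_left _ hr₂
        have : 0 < A T₂ / T₂ := div_pos hA₂ hT₂0
        linarith
      linarith
    set R : ℝ := 1 + A T₁ / (4 * T₁ * c) with hR
    have hA₁ : 0 < A T₁ := hpos T₁ hmem₁
    have hR1 : (1:ℝ) < R := by
      rw [hR]
      have : 0 < A T₁ / (4 * T₁ * c) := div_pos hA₁ (by positivity)
      linarith
    have h3 : T₂ ^ ((1:ℝ)/4) < T₁ ^ ((1:ℝ)/4) * R := by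
      have hc4 : (0:ℝ) < 4 * c := by linarith
      rw [← mul_lt_mul_iff_left₀ hc4]
      calc T₂ ^ ((1:ℝ)/4) * (4 * c) < T₁ ^ ((1:ℝ)/4) * (A T₁ / T₁ + 4 * c) := h2
        _ = T₁ ^ ((1:ℝ)/4) * R * (4 * c) := by
            rw [hR]; field_simp; ring
    have hpow : ∀ r : ℝ, 0 < r → (r ^ ((1:ℝ)/4)) ^ (4:ℕ) = r := by
      intro r hr
      rw [← Real.rpow_natCast (r ^ ((1:ℝ)/4)) 4, ← Real.rpow_mul (le_of_lt hr)]
      norm_num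
    have h4 : (T₂ ^ ((1:ℝ)/4)) ^ (4:ℕ) < (T₁ ^ ((1:ℝ)/4) * R) ^ (4:ℕ) :=
      pow_lt_pow_left₀ h3 (le_of_lt hr₂) (by norm_num)
    rw [hpow T₂ hT₂0, mul_pow, hpow T₁ hT₁] at h4
    calc T₂ < T₁ * R ^ (4:ℕ) := h4
      _ = R ^ 4 * T₁ := by ring
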